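/- For every real failover capacity B ≥ 1 and every demand multiset J with total size S = Σ_{s ∈ J} s, there exists a feasible solution of J using at most 8·S + 2 machines. -/

import Mathlib

open scoped BigOperators

/-- A demand multiset for failover capacity `B`: every size lies in `(0, min 1 (B/2)]`. -/
def IsDemandMultiset (B : ℝ) (J : Multiset ℝ) : Prop :=
  ∀ s ∈ J, 0 < s ∧ s ≤ min 1 (B / 2)

/-- A configuration: a multiset of sizes in `(0, min 1 (B/2)]` with total size at most 1
and total size plus maximum size at most `B`. -/
def IsConfig (B : ℝ) (C : Multiset ℝ) : Prop :=
  IsDemandMultiset B C ∧ C.sum ≤ 1 ∧ ∀ s ∈ C, C.sum + s ≤ B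

/-- A feasible solution of the demand multiset `J` on `m` machines: each demand is assigned
to an unordered pair of distinct machines (represented by a symmetric, diagonal-free
family `A u v` of multisets of demands whose total is `J`), satisfying, at every machine `u`,
the Nominal constraint `L_u ≤ 1` and the Failover constraint `L_u + max_{v ≠ u} L_{uv} ≤ B`. -/
def IsFeasibleSolution (B : ℝ) (J : Multiset ℝ) (m : ℕ) : Prop :=
  ∃ A : Fin m → Fin m → Multiset ℝ,
    (∀ u v, A u v = A v u) ∧
    (∀ u, A u u = 0) ∧
    (∑ p ∈ Finset.univ.filter (fun p : Fin m × Fin m => p.1 < p.2), A p.1 p.2) = J ∧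
    (∀ u, (∑ v, (A u v).sum) ≤ 1) ∧
    (∀ u v, v ≠ u → (∑ w, (A u w).sum) + (A u v).sum ≤ B)

/-- A feasible solution of the configuration LP of `J`: a finitely supported nonnegative
vector over configurations whose elements are size values occurring in `J`, covering each
distinct size value `t` at least `2 · mult_t(J)` times. -/
def IsLPSolution (B : ℝ) (J : Multiset ℝ) (x : Multiset ℝ →₀ ℝ) : Prop :=
  (∀ C, 0 ≤ x C) ∧
  (∀ C ∈ x.support, IsConfig B C ∧ ∀ s ∈ C, s ∈ J) ∧
  (∀ t ∈ J, 2 * (J.count t : ℝ) ≤ ∑ C ∈ x.support, x C * (C.count t : ℝ))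

/-- The optimal value `LP_mach(J)` of the configuration LP of `J`. -/
noncomputable def LPmach (B : ℝ) (J : Multiset ℝ) : ℝ :=
  sInf {v | ∃ x : Multiset ℝ →₀ ℝ, IsLPSolution B J x ∧ (∑ C ∈ x.support, x C) = v}

/-- For every failover capacity `B ≥ 1` and every demand multiset `J` with total size
`S = Σ_{s ∈ J} s`, there exists a feasible solution of `J` using at most `8·S + 2` machines. -/
lemma bins_exist (c : ℝ) (hc : 0 < c) (J : Multiset ℝ) :
    (∀ s ∈ J, 0 < s ∧ s ≤ c) →
    ∃ L : List (Multiset ℝ), L.sum = J ∧ (∀ C ∈ L, 0 ≤ C.sum ∧ C.sum ≤ c) ∧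
      ((L.length : ℝ) - 1) * c + L.headI.sum ≤ 2 * J.sum := by
  induction J using Multiset.induction_on with
  | empty =>
    intro _
    refine ⟨[], rfl, by simp, ?_⟩
    have hd : (([] : List (Multiset ℝ)).headI) = 0 := rfl
    rw [hd]
    simp
    linarith
  | cons s J ih =>
    intro hJ
    obtain ⟨hs0, hsc⟩ := hJ s (Multiset.mem_cons_self s J)
    obtain ⟨L, hLsum, hLbins, hLlen⟩ := ih (fun t ht => hJ t (Multiset.mem_cons_of_mem ht))
    have hJ0 : 0 ≤ J.sum := by
      apply Multiset.sum_nonneg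
      intro x hx
      exact le_of_lt (hJ x (Multiset.mem_cons_of_mem hx)).1
    match L, hLsum, hLbins, hLlen with
    | [], hLsum, hLbins, hLlen =>
      have hJ' : J = 0 := by simpa using hLsum.symm
      subst hJ'
      refine ⟨[{s}], by simp, ?_, ?_⟩
      · intro C hC
        simp at hC
        subst hC
        simp
        exact ⟨le_of_lt hs0, hsc⟩
      · simp
        linarith
    | F :: L', hLsum, hLbins, hLlen =>
      have hF0 : 0 ≤ F.sum := (hLbins F (by simp)).1
      by_cases hfit : F.sum + s ≤ c
      · refine ⟨(s ::ₘ F) :: L', ?_, ?_, ?_⟩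
        · rw [← hLsum]; simp [List.sum_cons, Multiset.cons_add]
        · intro C hC
          rcases List.mem_cons.1 hC with h | h
          · subst h
            rw [Multiset.sum_cons]
            constructor <;> linarith
          · exact hLbins C (List.mem_cons_of_mem _ h)
        · simp only [List.length_cons, List.headI_cons, Multiset.sum_cons] at hLlen ⊢
          push_cast at hLlen ⊢
          linarith
      · refine ⟨{s} :: F :: L', ?_, ?_, ?_⟩
        · rw [← hLsum]; simp [List.sum_cons, Multiset.cons_add]
        · intro C hC
          rcases List.mem_cons.1 hC with h | h
          · subst h
            simp
            exact ⟨le_of_lt hs0, hsc⟩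
          · exact hLbins C h
        · simp only [List.length_cons, List.headI_cons] at hLlen ⊢
          push_cast at hLlen ⊢
          simp only [Multiset.sum_cons, Multiset.sum_singleton]
          linarith

lemma sum_getD (L : List (Multiset ℝ)) :
    ∑ i ∈ Finset.range L.length, L.getD i 0 = L.sum := by
  induction L with
  | nil => simp
  | cons a L ih =>
    rw [List.length_cons, Finset.sum_range_succ']
    simp only [List.getD_cons_succ, List.getD_cons_zero, ih, List.sum_cons]
    exact add_comm _ _

lemma half_sum (f : ℕ → Multiset ℝ) (k : ℕ) :
    ∑ i ∈ Finset.range (2*k), (if i % 2 = 0 then f (i/2) else 0) = ∑ i ∈ Finset.range k, f i := by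
  induction k with
  | zero => simp
  | succ k ih =>
    have h : 2*(k+1) = (2*k)+1+1 := by ring
    rw [h, Finset.sum_range_succ, Finset.sum_range_succ, ih, Finset.sum_range_succ]
    have h1 : (2*k) % 2 = 0 := by omega
    have h2 : ¬ ((2*k+1) % 2 = 0) := by omega
    rw [if_pos h1, if_neg h2]
    have h3 : (2*k)/2 = k := by omega
    rw [h3, add_zero]

theorem stmt_1 (B : ℝ) (hB : 1 ≤ B) (J : Multiset ℝ) (hJ : IsDemandMultiset B J) :
    ∃ m : ℕ, (m : ℝ) ≤ 8 * J.sum + 2 ∧ IsFeasibleSolution B J m := by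
  set c : ℝ := min 1 (B/2) with hcdef
  have hc1 : c ≤ 1 := min_le_left _ _
  have hcB : c ≤ B/2 := min_le_right _ _
  have hc2 : (1:ℝ)/2 ≤ c := le_min (by linarith) (by linarith)
  have hcpos : 0 < c := by linarith
  obtain ⟨L, hLsum, hLbins, hLlen⟩ := bins_exist c hcpos J hJ
  set k := L.length with hk
  set f : ℕ → Multiset ℝ := fun i => L.getD i 0 with hf
  have hfsum : ∀ i, 0 ≤ (f i).sum ∧ (f i).sum ≤ c := by
    intro i
    by_cases h : i < k
    · have hmem : f i ∈ L := by
        simp only [hf]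
        rw [List.getD_eq_getElem L 0 h]
        exact List.getElem_mem h
      exact hLbins _ hmem
    · have : f i = 0 := List.getD_eq_default L 0 (by omega)
      rw [this]
      simp [hcpos.le]
  have hS : 0 ≤ J.sum := by
    apply Multiset.sum_nonneg
    intro x hx
    exact le_of_lt (hJ x hx).1
  have hheadI : 0 ≤ L.headI.sum := by
    cases L with
    | nil =>
      have hd : (([] : List (Multiset ℝ)).headI) = 0 := rfl
      rw [hd]; simp
    | cons a l => exact (hLbins a (by simp)).1
  refine ⟨2*k, ?_, ?_⟩
  · push_cast
    rcases Nat.eq_zero_or_pos k with h0 | h1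
    · rw [h0]; push_cast; linarith
    · have hk1 : (1:ℝ) ≤ (k:ℝ) := by exact_mod_cast h1
      nlinarith [hLlen, hc2, hheadI]
  set A : Fin (2*k) → Fin (2*k) → Multiset ℝ :=
    fun u v => if (u:ℕ)/2 = (v:ℕ)/2 ∧ (u:ℕ) ≠ (v:ℕ) then f ((u:ℕ)/2) else 0 with hA
  have hnn : ∀ (a b : Fin (2*k)), 0 ≤ ((A a b).sum) := by
    intro a b
    simp only [hA]
    split
    · exact (hfsum _).1
    · simp
  have hrowsum : ∀ u : Fin (2*k), ∑ v, (A u v).sum = (f ((u:ℕ)/2)).sum := by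
    intro u
    have hu := u.isLt
    set w : Fin (2*k) := ⟨2*((u:ℕ)/2) + (1 - (u:ℕ)%2), by omega⟩ with hw
    have h1 : (A u w).sum = (f ((u:ℕ)/2)).sum := by
      simp only [hA, hw]
      rw [if_pos]
      exact ⟨by omega, by omega⟩
    have h2 : ∀ v : Fin (2*k), v ≠ w → (A u v).sum = 0 := by
      intro v hv
      simp only [hA]
      rw [if_neg]
      · simp
      · rintro ⟨hh1, hh2⟩
        apply hv
        apply Fin.ext
        have hvlt := v.isLt
        simp only [hw]
        omega
    rw [Finset.sum_eq_single_of_mem w (Finset.mem_univ w) (fun v _ hv => h2 v hv), h1]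
  refine ⟨A, ?_, ?_, ?_, ?_, ?_⟩
  · intro u v
    simp only [hA]
    by_cases h : (u:ℕ)/2 = (v:ℕ)/2 ∧ (u:ℕ) ≠ (v:ℕ)
    · rw [if_pos h, if_pos ⟨h.1.symm, h.2.symm⟩, h.1]
    · rw [if_neg h, if_neg (fun h' => h ⟨h'.1.symm, h'.2.symm⟩)]
  · intro u
    simp only [hA]
    rw [if_neg]
    rintro ⟨-, h2⟩
    exact h2 rfl
  · rw [Finset.sum_filter, Fintype.sum_prod_type]
    have hrow : ∀ u : Fin (2*k), (∑ v, (if u < v then A u v else 0))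
        = if (u:ℕ) % 2 = 0 then f ((u:ℕ)/2) else 0 := by
      intro u
      have hu := u.isLt
      by_cases hue : (u:ℕ) % 2 = 0
      · rw [if_pos hue]
        set w : Fin (2*k) := ⟨(u:ℕ)+1, by omega⟩ with hw
        have h1 : (if u < w then A u w else 0) = f ((u:ℕ)/2) := by
          rw [if_pos (by rw [Fin.lt_def]; simp [hw])]
          simp only [hA, hw]
          rw [if_pos]
          exact ⟨by omega, by omega⟩
        have h2 : ∀ v : Fin (2*k), v ≠ w → (if u < v then A u v else 0) = 0 := by
          intro v hv
          by_cases hlt : u < v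
          · rw [if_pos hlt]
            simp only [hA]
            rw [if_neg]
            rintro ⟨hh1, hh2⟩
            apply hv
            apply Fin.ext
            have hvlt := v.isLt
            have hlt' : (u:ℕ) < (v:ℕ) := hlt
            simp only [hw]
            omega
          · rw [if_neg hlt]
        rw [Finset.sum_eq_single_of_mem w (Finset.mem_univ w) (fun v _ hv => h2 v hv), h1]
      · rw [if_neg hue]
        apply Finset.sum_eq_zero
        intro v _
        by_cases hlt : u < v
        · rw [if_pos hlt]
          simp only [hA]
          rw [if_neg]
          rintro ⟨hh1, hh2⟩
          have hlt' : (u:ℕ) < (v:ℕ) := hlt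
          omega
        · rw [if_neg hlt]
    rw [Finset.sum_congr rfl (fun u _ => hrow u)]
    rw [Fin.sum_univ_eq_sum_range (fun i => if i % 2 = 0 then f (i/2) else 0) (2*k)]
    rw [half_sum f k]
    simp only [hf, hk]
    rw [sum_getD L, hLsum]
  · intro u
    rw [hrowsum u]
    exact le_trans (hfsum _).2 hc1
  · intro u v _
    have hle : (A u v).sum ≤ ∑ w, (A u w).sum :=
      Finset.single_le_sum (fun w _ => hnn u w) (Finset.mem_univ v)
    have := hrowsum u
    have h2 := (hfsum ((u:ℕ)/2)).2
    linarith
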